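/- Consider a Bianchi VII₀ solution of the Wainwright–Hsu equations with N₁ = 0 and N₂, N₃ > 0 satisfying the vacuum constraint. Then the quantity Z₋₁ = [(4/3)Σ₋² + (N₂ − N₃)²]/(N₂N₃) has non-positive derivative along the solution. -/

import Mathlib

/-- `q = 2(Σ₊² + Σ₋²)`. -/
noncomputable def WHq (Sp Sm : ℝ) : ℝ := 2 * (Sp ^ 2 + Sm ^ 2)

/-- `S₊ = (1/2)[(N₂−N₃)² − N₁(2N₁−N₂−N₃)]`. -/
noncomputable def WHSplus (N1 N2 N3 : ℝ) : ℝ :=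
  (1 / 2) * ((N2 - N3) ^ 2 - N1 * (2 * N1 - N2 - N3))

/-- `S₋ = (√3/2)(N₃−N₂)(N₁−N₂−N₃)`. -/
noncomputable def WHSminus (N1 N2 N3 : ℝ) : ℝ :=
  (Real.sqrt 3 / 2) * (N3 - N2) * (N1 - N2 - N3)

/-- The Wainwright–Hsu evolution equations for Bianchi class A vacuum solutions. -/
structure WHSolution (Sp Sm N1 N2 N3 : ℝ → ℝ) : Prop where
  hN1 : ∀ τ : ℝ, HasDerivAt N1 ((WHq (Sp τ) (Sm τ) - 4 * Sp τ) * N1 τ) τ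
  hN2 : ∀ τ : ℝ, HasDerivAt N2
    ((WHq (Sp τ) (Sm τ) + 2 * Sp τ + 2 * Real.sqrt 3 * Sm τ) * N2 τ) τ
  hN3 : ∀ τ : ℝ, HasDerivAt N3
    ((WHq (Sp τ) (Sm τ) + 2 * Sp τ - 2 * Real.sqrt 3 * Sm τ) * N3 τ) τ
  hSp : ∀ τ : ℝ, HasDerivAt Sp
    (-(2 - WHq (Sp τ) (Sm τ)) * Sp τ - 3 * WHSplus (N1 τ) (N2 τ) (N3 τ)) τ
  hSm : ∀ τ : ℝ, HasDerivAt Sm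
    (-(2 - WHq (Sp τ) (Sm τ)) * Sm τ - 3 * WHSminus (N1 τ) (N2 τ) (N3 τ)) τ

/-- The vacuum Hamiltonian constraint. -/
def WHConstraint (Sp Sm N1 N2 N3 : ℝ → ℝ) : Prop :=
  ∀ τ : ℝ, Sp τ ^ 2 + Sm τ ^ 2 + (3 / 4) * ((N1 τ) ^ 2 + (N2 τ) ^ 2 + (N3 τ) ^ 2
    - 2 * (N1 τ * N2 τ + N2 τ * N3 τ + N1 τ * N3 τ)) = 1

/-- For a Bianchi VII₀ solution (`N₁ = 0`, `N₂, N₃ > 0`) satisfying the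
constraint, the quantity `Z₋₁ = [(4/3)Σ₋² + (N₂−N₃)²]/(N₂N₃)` has non-positive
derivative. -/
theorem bianchi_vii0_Zm1_monotone (Sp Sm N1 N2 N3 : ℝ → ℝ)
    (hsol : WHSolution Sp Sm N1 N2 N3) (hcon : WHConstraint Sp Sm N1 N2 N3)
    (hN1 : ∀ τ, N1 τ = 0) (hN2 : ∀ τ, 0 < N2 τ) (hN3 : ∀ τ, 0 < N3 τ) :
    ∀ τ : ℝ, ∃ d : ℝ, d ≤ 0 ∧
      HasDerivAt (fun t => ((4 / 3) * (Sm t) ^ 2 + (N2 t - N3 t) ^ 2) / (N2 t * N3 t))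
        d τ := by
  intro τ
  have h1 := hN1 τ
  have hc := hcon τ
  rw [h1] at hc
  have hdm := hsol.hSm τ
  have hd2 := hsol.hN2 τ
  have hd3 := hsol.hN3 τ
  have hgpos : 0 < N2 τ * N3 τ := mul_pos (hN2 τ) (hN3 τ)
  have hgne : N2 τ * N3 τ ≠ 0 := ne_of_gt hgpos
  have hf := ((hdm.pow 2).const_mul ((4:ℝ)/3)).add ((hd2.sub hd3).pow 2)
  have hg := hd2.mul hd3
  have hdiv := hf.div hg hgne
  refine ⟨_, ?_, hdiv⟩
  apply div_nonpos_of_nonpos_of_nonneg _ (sq_nonneg _)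
  have hkey :
      ((4:ℝ) / 3 * (↑2 * Sm τ ^ (2 - 1) *
          (-(2 - WHq (Sp τ) (Sm τ)) * Sm τ - 3 * WHSminus (N1 τ) (N2 τ) (N3 τ))) +
        ↑2 * (N2 τ - N3 τ) ^ (2 - 1) *
          ((WHq (Sp τ) (Sm τ) + 2 * Sp τ + 2 * Real.sqrt 3 * Sm τ) * N2 τ -
            (WHq (Sp τ) (Sm τ) + 2 * Sp τ - 2 * Real.sqrt 3 * Sm τ) * N3 τ)) *
          (N2 τ * N3 τ) -
        (4 / 3 * Sm τ ^ 2 + (N2 τ - N3 τ) ^ 2) *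
          ((WHq (Sp τ) (Sm τ) + 2 * Sp τ + 2 * Real.sqrt 3 * Sm τ) * N2 τ * N3 τ +
            N2 τ * ((WHq (Sp τ) (Sm τ) + 2 * Sp τ - 2 * Real.sqrt 3 * Sm τ) * N3 τ)) =
      -(16 / 3) * Sm τ ^ 2 * (1 + Sp τ) * (N2 τ * N3 τ) := by
    simp only [WHq, WHSminus, h1]
    ring
  push_cast
  simp only [Pi.add_apply, Pi.sub_apply, Pi.mul_apply, Pi.pow_apply, show (2:ℕ) - 1 = 1 from rfl] at hkey ⊢
  rw [hkey]
  have hSp : -1 ≤ Sp τ := by nlinarith [sq_nonneg (Sm τ), sq_nonneg (N2 τ - N3 τ), sq_nonneg (Sp τ + 1)]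
  have hnn : (0:ℝ) ≤ Sm τ ^ 2 * (1 + Sp τ) * (N2 τ * N3 τ) :=
    mul_nonneg (mul_nonneg (sq_nonneg _) (by linarith)) hgpos.le
  linarith
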